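/- Let G be a strongly connected signed digraph. Then G is structurally unbalanced if and only if every complex eigenvalue of the matrix W·L has strictly positive real part. -/

import Mathlib

open Matrix BigOperators Filter

/-- In-degree of node `i`: sum of absolute values of the `i`-th row of `A`. -/
noncomputable def inDeg {n : ℕ} (A : Matrix (Fin n) (Fin n) ℝ) (i : Fin n) : ℝ := ∑ j, |A i j|

/-- Laplacian `L = Δ − A` of the signed digraph with adjacency matrix `A`. -/
noncomputable def lapOf {n : ℕ} (A : Matrix (Fin n) (Fin n) ℝ) : Matrix (Fin n) (Fin n) ℝ :=
  Matrix.diagonal (inDeg A) - A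

/-- Laplacian `L̄ = Δ − Ā` of the induced unsigned digraph. -/
noncomputable def lapBar {n : ℕ} (A : Matrix (Fin n) (Fin n) ℝ) : Matrix (Fin n) (Fin n) ℝ :=
  Matrix.diagonal (inDeg A) - Matrix.of (fun i j => |A i j|)

/-- `det(L̄_ii)`: determinant of `L̄` with its `i`-th row and column removed. -/
noncomputable def minorDet {n : ℕ} (A : Matrix (Fin n) (Fin n) ℝ) (i : Fin n) : ℝ :=
  Matrix.det ((lapBar A).submatrix (fun k : {j : Fin n // j ≠ i} => (k : Fin n))
    (fun k : {j : Fin n // j ≠ i} => (k : Fin n)))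

/-- `W = diag(det(L̄_11), …, det(L̄_nn))`. -/
noncomputable def Wmat {n : ℕ} (A : Matrix (Fin n) (Fin n) ℝ) : Matrix (Fin n) (Fin n) ℝ :=
  Matrix.diagonal (minorDet A)

/-- Mirror adjacency matrix `Â = (W·A + Aᵀ·W)/2`. -/
noncomputable def mirrorAdj {n : ℕ} (A : Matrix (Fin n) (Fin n) ℝ) : Matrix (Fin n) (Fin n) ℝ :=
  (1/2 : ℝ) • (Wmat A * A + Aᵀ * Wmat A)

/-- Mirror Laplacian `L̂ = (W·L + Lᵀ·W)/2`. -/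
noncomputable def mirrorLap {n : ℕ} (A : Matrix (Fin n) (Fin n) ℝ) : Matrix (Fin n) (Fin n) ℝ :=
  (1/2 : ℝ) • (Wmat A * lapOf A + (lapOf A)ᵀ * Wmat A)

/-- `(j, i)` is a directed edge when `a_ij ≠ 0`; strong connectivity: a directed
path between every ordered pair of distinct nodes. -/
def StronglyConnected {n : ℕ} (A : Matrix (Fin n) (Fin n) ℝ) : Prop :=
  ∀ i j : Fin n, i ≠ j → Relation.TransGen (fun u v => A v u ≠ 0) i j

/-- `σ` is the diagonal of a gauge transformation: each entry is `±1`. -/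
def IsGauge {n : ℕ} (σ : Fin n → ℝ) : Prop := ∀ i, σ i = 1 ∨ σ i = -1

/-- Structural balance: there is a gauge transformation `D = diag σ` with all entries
of `D·A·D` (entrywise `σ i * A i j * σ j`) nonnegative. -/
def StructBalanced {n : ℕ} (A : Matrix (Fin n) (Fin n) ℝ) : Prop :=
  ∃ σ : Fin n → ℝ, IsGauge σ ∧ ∀ i j, 0 ≤ σ i * A i j * σ j

/-- Improved Laplacian potential function
`Φ_e(x) = Σ_i Σ_j det(L̄_ii)·|a_ij|·(x_i − sgn(a_ij)·x_j)²`. -/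
noncomputable def PhiE {n : ℕ} (A : Matrix (Fin n) (Fin n) ℝ) (x : Fin n → ℝ) : ℝ :=
  ∑ i, ∑ j, minorDet A i * |A i j| * (x i - Real.sign (A i j) * x j) ^ 2

section Aux
variable {n : ℕ} {A : Matrix (Fin n) (Fin n) ℝ}

private lemma myClosureAux (S : Set (Fin n))
    (hcl : ∀ k ∈ S, ∀ j, A k j ≠ 0 → j ∈ S) {k₀ l : Fin n}
    (h : Relation.TransGen (fun u v => A u v ≠ 0) k₀ l) (hk₀ : k₀ ∈ S) : l ∈ S := by
  induction h with
  | single h => exact hcl _ hk₀ _ h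
  | tail _ h ih => exact hcl _ ih _ h

lemma myClosure (hsc : StronglyConnected A) (S : Set (Fin n))
    (hcl : ∀ k ∈ S, ∀ j, A k j ≠ 0 → j ∈ S) {k₀ : Fin n} (hk₀ : k₀ ∈ S) :
    ∀ l, l ∈ S := by
  intro l
  rcases eq_or_ne l k₀ with rfl | hne
  · exact hk₀
  · exact myClosureAux S hcl ((Relation.transGen_swap).mpr (hsc l k₀ hne)) hk₀

lemma exists_in_edge (hsc : StronglyConnected A) (hn : 2 ≤ n) (i : Fin n) :
    ∃ j, A i j ≠ 0 := by
  have hcard : 1 < Fintype.card (Fin n) := by rw [Fintype.card_fin]; omega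
  obtain ⟨j, hj⟩ := Fintype.exists_ne_of_one_lt_card hcard i
  obtain ⟨b, -, hb⟩ := Relation.TransGen.tail'_iff.mp (hsc j i hj)
  exact ⟨b, hb⟩

lemma inDeg_nonneg (A : Matrix (Fin n) (Fin n) ℝ) (i : Fin n) : 0 ≤ inDeg A i :=
  Finset.sum_nonneg fun j _ => abs_nonneg _

lemma inDeg_pos (hsc : StronglyConnected A) (hn : 2 ≤ n) (i : Fin n) :
    0 < inDeg A i := by
  obtain ⟨j, hj⟩ := exists_in_edge hsc hn i
  have h1 : |A i j| ≤ inDeg A i :=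
    Finset.single_le_sum (f := fun j => |A i j|) (fun _ _ => abs_nonneg _) (Finset.mem_univ j)
  exact lt_of_lt_of_le (abs_pos.mpr hj) h1

lemma lapBar_mulVec (v : Fin n → ℝ) (k : Fin n) :
    (lapBar A *ᵥ v) k = inDeg A k * v k - ∑ j, |A k j| * v j := by
  simp only [lapBar, Matrix.mulVec, dotProduct, Matrix.sub_apply, Matrix.of_apply,
    sub_mul, Finset.sum_sub_distrib, Matrix.diagonal_apply]
  congr 1
  simp [ite_mul, Finset.sum_ite_eq]

/-- kernel of the unsigned Laplacian consists of constants -/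
lemma kerBar_const (hsc : StronglyConnected A) (hn : 2 ≤ n) {v : Fin n → ℝ}
    (hv : lapBar A *ᵥ v = 0) : ∀ k l, v k = v l := by
  have hrow : ∀ k, inDeg A k * v k = ∑ j, |A k j| * v j := by
    intro k
    have := congrFun hv k
    rw [lapBar_mulVec] at this
    simpa [sub_eq_zero] using this
  obtain ⟨k₀, -, hk₀⟩ := Finset.exists_max_image Finset.univ v ⟨⟨0, by omega⟩, Finset.mem_univ _⟩
  have hS : ∀ l, v l = v k₀ := by
    apply myClosure hsc {k | v k = v k₀} ?_ (rfl : v k₀ = v k₀)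
    intro k hk j hj
    have hsum : ∑ j, |A k j| * (v k₀ - v j) = 0 := by
      have : ∑ j, |A k j| * (v k₀ - v j)
          = (∑ j, |A k j|) * v k₀ - ∑ j, |A k j| * v j := by
        rw [Finset.sum_mul]
        rw [← Finset.sum_sub_distrib]
        congr 1; ext j; ring
      rw [this, ← hrow k]
      have : v k = v k₀ := hk
      rw [this]; ring_nf
      simp [inDeg, Finset.sum_mul, mul_comm]
    have hterm := (Finset.sum_eq_zero_iff_of_nonneg (fun j _ =>
      mul_nonneg (abs_nonneg (A k j)) (by linarith [hk₀ j (Finset.mem_univ j)]))).mp hsum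
        j (Finset.mem_univ j)
    have habs : |A k j| ≠ 0 := abs_ne_zero.mpr hj
    have : v k₀ - v j = 0 := by
      rcases mul_eq_zero.mp hterm with h | h
      · exact absurd h habs
      · exact h
    simp [Set.mem_setOf_eq]
    linarith
  intro k l; rw [hS k, hS l]
end Aux

section Minor
variable {n : ℕ} {A : Matrix (Fin n) (Fin n) ℝ}

lemma sum_subtype_ne (i : Fin n) (f : Fin n → ℝ) :
    ∑ l : {j : Fin n // j ≠ i}, f l.1 = (∑ j, f j) - f i := by
  rw [← Finset.sum_subtype ({i}ᶜ : Finset (Fin n)) (by simp) f,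
    Fintype.sum_eq_add_sum_compl i f]
  ring

/-- homotopy from a diagonal matrix to the principal minor of `lapBar`. -/
noncomputable def Fmat (A : Matrix (Fin n) (Fin n) ℝ) (i : Fin n) (t : ℝ) :
    Matrix {j : Fin n // j ≠ i} {j : Fin n // j ≠ i} ℝ :=
  Matrix.of fun k l => (if k = l then inDeg A k.1 else 0) - t * |A k.1 l.1|

lemma Fmat_one (i : Fin n) :
    Fmat A i 1 = (lapBar A).submatrix (fun k : {j : Fin n // j ≠ i} => (k : Fin n))
      (fun k : {j : Fin n // j ≠ i} => (k : Fin n)) := by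
  ext k l
  simp only [Fmat, Matrix.of_apply, Matrix.submatrix_apply, lapBar, Matrix.sub_apply,
    Matrix.diagonal_apply, one_mul]
  congr 1
  by_cases h : k = l
  · simp [h]
  · have : (k : Fin n) ≠ (l : Fin n) := fun hh => h (Subtype.ext hh)
    simp [h, this]

lemma Fmat_mulVec (i : Fin n) (t : ℝ) (x : {j : Fin n // j ≠ i} → ℝ)
    (k : {j : Fin n // j ≠ i}) :
    (Fmat A i t *ᵥ x) k = inDeg A k.1 * x k - t * ∑ l : {j : Fin n // j ≠ i}, |A k.1 l.1| * x l := by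
  simp only [Fmat, Matrix.mulVec, dotProduct, Matrix.of_apply, sub_mul,
    Finset.sum_sub_distrib, ite_mul, zero_mul]
  congr 1
  · simp [Finset.sum_ite_eq]
  · rw [Finset.mul_sum]; congr 1; ext l; ring

lemma det_Fmat_ne_zero (hsc : StronglyConnected A) (hn : 2 ≤ n) (i : Fin n) {t : ℝ}
    (ht0 : 0 ≤ t) (ht1 : t < 1) : (Fmat A i t).det ≠ 0 := by
  intro hdet
  obtain ⟨x, hx, hxv⟩ := (Matrix.exists_mulVec_eq_zero_iff).mpr hdet
  obtain ⟨j₀, hj₀⟩ := Fintype.exists_ne_of_one_lt_card (by rw [Fintype.card_fin]; omega) i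
  obtain ⟨k₀, -, hk₀⟩ := Finset.exists_max_image Finset.univ (fun k => |x k|)
      ⟨⟨j₀, hj₀⟩, Finset.mem_univ _⟩
  have hm : 0 < |x k₀| := by
    obtain ⟨u, hu⟩ := Function.ne_iff.mp hx
    exact lt_of_lt_of_le (abs_pos.mpr hu) (hk₀ u (Finset.mem_univ u))
  have hrow := congrFun hxv k₀
  rw [Fmat_mulVec] at hrow
  simp only [Pi.zero_apply, sub_eq_zero] at hrow
  have hd := inDeg_pos hsc hn k₀.1
  have hb1 : |∑ l : {j : Fin n // j ≠ i}, |A k₀.1 l.1| * x l|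
      ≤ ∑ l : {j : Fin n // j ≠ i}, |A k₀.1 l.1| * |x k₀| := by
    refine (Finset.abs_sum_le_sum_abs _ _).trans (Finset.sum_le_sum fun l _ => ?_)
    rw [abs_mul, abs_abs]
    exact mul_le_mul_of_nonneg_left (hk₀ l (Finset.mem_univ l)) (abs_nonneg _)
  have hb2 : ∑ l : {j : Fin n // j ≠ i}, |A k₀.1 l.1| * |x k₀| ≤ inDeg A k₀.1 * |x k₀| := by
    have := sum_subtype_ne i (fun j => |A k₀.1 j| * |x k₀|)
    rw [this]
    have : 0 ≤ |A k₀.1 i| * |x k₀| := mul_nonneg (abs_nonneg _) (abs_nonneg _)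
    simp only [inDeg, Finset.sum_mul]
    linarith
  have : inDeg A k₀.1 * |x k₀| ≤ t * (inDeg A k₀.1 * |x k₀|) := by
    calc inDeg A k₀.1 * |x k₀| = |inDeg A k₀.1 * x k₀| := by
          rw [abs_mul, abs_of_pos hd]
      _ = |t * ∑ l : {j : Fin n // j ≠ i}, |A k₀.1 l.1| * x l| := by rw [hrow]
      _ = t * |∑ l : {j : Fin n // j ≠ i}, |A k₀.1 l.1| * x l| := by
          rw [abs_mul, abs_of_nonneg ht0]
      _ ≤ t * (inDeg A k₀.1 * |x k₀|) :=
          mul_le_mul_of_nonneg_left (hb1.trans hb2) ht0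
  have hP : 0 < inDeg A k₀.1 * |x k₀| := mul_pos hd hm
  nlinarith [mul_lt_mul_of_pos_right ht1 hP]

lemma det_Fmat_zero_pos (hsc : StronglyConnected A) (hn : 2 ≤ n) (i : Fin n) :
    0 < (Fmat A i 0).det := by
  have : Fmat A i 0 = Matrix.diagonal (fun k : {j : Fin n // j ≠ i} => inDeg A k.1) := by
    ext k l
    by_cases h : k = l <;> simp [Fmat, Matrix.diagonal_apply, h]
  rw [this, Matrix.det_diagonal]
  exact Finset.prod_pos fun k _ => inDeg_pos hsc hn k.1

end Minor

section MinorPos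
variable {n : ℕ} {A : Matrix (Fin n) (Fin n) ℝ}

lemma minorDet_nonneg (hsc : StronglyConnected A) (hn : 2 ≤ n) (i : Fin n) :
    0 ≤ minorDet A i := by
  by_contra hneg
  push_neg at hneg
  have hcont : Continuous fun t : ℝ => (Fmat A i t).det := by
    apply Continuous.matrix_det
    apply continuous_pi; intro k; apply continuous_pi; intro l
    exact continuous_const.sub (continuous_id.mul continuous_const)
  have h1 : (Fmat A i 1).det < 0 := by rw [Fmat_one]; exact hneg
  have h0 : 0 < (Fmat A i 0).det := det_Fmat_zero_pos hsc hn i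
  have : (0 : ℝ) ∈ Set.Icc ((Fmat A i 1).det) ((Fmat A i 0).det) :=
    ⟨le_of_lt h1, le_of_lt h0⟩
  obtain ⟨t, ht, hgt⟩ := intermediate_value_Icc' (by norm_num : (0:ℝ) ≤ 1)
    (hcont.continuousOn) this
  have hgt' : (Fmat A i t).det = 0 := hgt
  have ht1 : t < 1 := by
    rcases lt_or_eq_of_le ht.2 with h | h
    · exact h
    · rw [h] at hgt'; rw [hgt'] at h1; exact absurd h1 (lt_irrefl 0)
  exact det_Fmat_ne_zero hsc hn i ht.1 ht1 hgt' 

lemma minorDet_ne_zero (hsc : StronglyConnected A) (hn : 2 ≤ n) (i : Fin n) :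
    minorDet A i ≠ 0 := by
  intro hdet
  rw [minorDet] at hdet
  obtain ⟨x, hx, hxv⟩ := (Matrix.exists_mulVec_eq_zero_iff).mpr hdet
  set y : Fin n → ℝ := fun j => if h : j = i then 0 else x ⟨j, h⟩ with hy
  have hyi : y i = 0 := by simp [hy]
  have hyval : ∀ l : {j : Fin n // j ≠ i}, y l.1 = x l := by
    intro l; simp [hy, l.2]
  -- row equation for k ≠ i
  have hrow : ∀ k : Fin n, k ≠ i → inDeg A k * y k = ∑ j, |A k j| * y j := by
    intro k hk
    have := congrFun hxv ⟨k, hk⟩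
    simp only [Matrix.mulVec, dotProduct, Matrix.submatrix_apply, Pi.zero_apply] at this
    have hsum : ∑ l : {j : Fin n // j ≠ i}, lapBar A k l.1 * y l.1 = 0 := by
      rw [← this]; congr 1; ext l; rw [hyval l]
    have hexpand : ∑ l : {j : Fin n // j ≠ i}, lapBar A k l.1 * y l.1
        = (∑ j, lapBar A k j * y j) - lapBar A k i * y i :=
      sum_subtype_ne i (fun j => lapBar A k j * y j)
    rw [hexpand, hyi, mul_zero, sub_zero] at hsum
    have : ∀ j, lapBar A k j * y j
        = (if k = j then inDeg A k else 0) * y j - |A k j| * y j := by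
      intro j; simp [lapBar, Matrix.diagonal_apply, sub_mul]
    rw [Finset.sum_congr rfl (fun j _ => this j), Finset.sum_sub_distrib] at hsum
    simp only [ite_mul, zero_mul, Finset.sum_ite_eq, Finset.mem_univ, if_true] at hsum
    linarith
  -- maximum-modulus
  obtain ⟨k₀, -, hk₀⟩ := Finset.exists_max_image Finset.univ (fun k => |y k|)
      ⟨i, Finset.mem_univ _⟩
  have hm : 0 < |y k₀| := by
    obtain ⟨u, hu⟩ := Function.ne_iff.mp hx
    have : (0:ℝ) < |y u.1| := by rw [hyval u]; exact abs_pos.mpr hu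
    exact lt_of_lt_of_le this (hk₀ u.1 (Finset.mem_univ _))
  set S : Set (Fin n) := {k | |y k| = |y k₀|} with hS
  have hiS : i ∉ S := by
    intro h
    rw [hS, Set.mem_setOf_eq, hyi, abs_zero] at h
    exact absurd h.symm (ne_of_gt hm)
  have hcl : ∀ k ∈ S, ∀ j, A k j ≠ 0 → j ∈ S := by
    intro k hk j hj
    have hki : k ≠ i := fun h => hiS (h ▸ hk)
    have hkeq : |y k| = |y k₀| := hk
    have hd := inDeg_pos hsc hn k
    have h1 : inDeg A k * |y k₀| ≤ ∑ j, |A k j| * |y j| := by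
      calc inDeg A k * |y k₀| = |inDeg A k * y k| := by
            rw [abs_mul, abs_of_pos hd, hkeq]
        _ = |∑ j, |A k j| * y j| := by rw [hrow k hki]
        _ ≤ ∑ j, |A k j| * |y j| := by
            refine (Finset.abs_sum_le_sum_abs _ _).trans_eq ?_
            congr 1; ext j; rw [abs_mul, abs_abs]
    have h2 : ∑ j, |A k j| * |y j| ≤ inDeg A k * |y k₀| := by
      rw [inDeg, Finset.sum_mul]
      exact Finset.sum_le_sum fun j _ =>
        mul_le_mul_of_nonneg_left (hk₀ j (Finset.mem_univ _)) (abs_nonneg _)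
    have heq : ∑ j, |A k j| * (|y k₀| - |y j|) = 0 := by
      have : ∑ j, |A k j| * (|y k₀| - |y j|)
          = inDeg A k * |y k₀| - ∑ j, |A k j| * |y j| := by
        rw [inDeg, Finset.sum_mul, ← Finset.sum_sub_distrib]
        congr 1; ext j; ring
      rw [this]; linarith
    have hterm := (Finset.sum_eq_zero_iff_of_nonneg (fun j _ =>
      mul_nonneg (abs_nonneg _) (by linarith [hk₀ j (Finset.mem_univ j)]))).mp heq
        j (Finset.mem_univ j)
    rcases mul_eq_zero.mp hterm with h | h
    · exact absurd h (abs_ne_zero.mpr hj)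
    · have : |y j| = |y k₀| := by linarith
      exact this
  have hk₀S : k₀ ∈ S := rfl
  exact hiS (myClosure hsc S hcl hk₀S i)

lemma minorDet_pos (hsc : StronglyConnected A) (hn : 2 ≤ n) (i : Fin n) :
    0 < minorDet A i :=
  lt_of_le_of_ne (minorDet_nonneg hsc hn i) (Ne.symm (minorDet_ne_zero hsc hn i))

end MinorPos

section Adjugate
variable {n : ℕ} {A : Matrix (Fin n) (Fin n) ℝ}

lemma lapBar_mulVec_one : lapBar A *ᵥ (fun _ => (1:ℝ)) = 0 := by
  ext k
  rw [lapBar_mulVec]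
  simp [inDeg]

lemma det_lapBar_zero (hn : 2 ≤ n) : (lapBar A).det = 0 := by
  rw [← Matrix.exists_mulVec_eq_zero_iff]
  refine ⟨fun _ => 1, ?_, lapBar_mulVec_one⟩
  intro h
  have := congrFun h ⟨0, by omega⟩
  simp at this

/-- The diagonal entries of the adjugate of `lapBar` are the principal minors. -/
lemma adjugate_lapBar_diag (i : Fin n) :
    (lapBar A).adjugate i i = minorDet A i := by
  rw [Matrix.adjugate_apply]
  set N := (lapBar A).updateRow i (Pi.single i 1) with hN
  set e : Unit ⊕ {j : Fin n // j ≠ i} ≃ Fin n :=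
    { toFun := Sum.elim (fun _ => i) (fun k => k.1)
      invFun := fun j => if h : j = i then Sum.inl () else Sum.inr ⟨j, h⟩
      left_inv := by
        rintro (u | k)
        · simp
        · simp [k.2]
      right_inv := by
        intro j
        by_cases h : j = i <;> simp [h] } with he
  rw [← Matrix.det_submatrix_equiv_self e N]
  have hblock : N.submatrix e e =
      Matrix.fromBlocks 1 0
        (Matrix.of fun (k : {j : Fin n // j ≠ i}) (_ : Unit) => lapBar A k.1 i)
        ((lapBar A).submatrix (fun k : {j : Fin n // j ≠ i} => (k : Fin n))
          (fun k : {j : Fin n // j ≠ i} => (k : Fin n))) := by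
    ext (u | k) (v | l)
    · simp [hN, he, Matrix.updateRow_self, Pi.single_eq_same]
    · have : (l : Fin n) ≠ i := l.2
      simp [hN, he, Matrix.updateRow_self, Pi.single_eq_of_ne this]
    · simp [hN, he, Matrix.updateRow_ne k.2]
    · simp [hN, he, Matrix.updateRow_ne k.2]
  rw [hblock, Matrix.det_fromBlocks_zero₁₂, Matrix.det_one, one_mul, minorDet]

/-- All entries of the adjugate of `lapBar` equal the corresponding diagonal minor. -/
lemma adjugate_lapBar_const (hsc : StronglyConnected A) (hn : 2 ≤ n) (k j : Fin n) :
    (lapBar A).adjugate k j = minorDet A j := by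
  have hcol : lapBar A *ᵥ (fun l => (lapBar A).adjugate l j) = 0 := by
    ext k'
    have := congrFun (congrFun (Matrix.mul_adjugate (lapBar A)) k') j
    rw [det_lapBar_zero hn] at this
    simpa [Matrix.mul_apply, Matrix.mulVec, dotProduct] using this
  have := kerBar_const hsc hn hcol k j
  rw [this, adjugate_lapBar_diag]

/-- Column sums: the left null vector of `lapBar` is `w = minorDet`. -/
lemma w_dot_lapBar (hsc : StronglyConnected A) (hn : 2 ≤ n) (j : Fin n) :
    ∑ k, minorDet A k * |A k j| = minorDet A j * inDeg A j := by
  have h := congrFun (congrFun (Matrix.adjugate_mul (lapBar A)) j) j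
  rw [det_lapBar_zero hn] at h
  simp only [Matrix.mul_apply, Matrix.zero_apply, Matrix.smul_apply, zero_smul] at h
  have h' : ∑ k, minorDet A k * lapBar A k j = 0 := by
    rw [← h]; congr 1; ext k; rw [adjugate_lapBar_const hsc hn j k]
  have hexp : ∀ k, minorDet A k * lapBar A k j
      = (if k = j then minorDet A k * inDeg A k else 0) - minorDet A k * |A k j| := by
    intro k
    simp only [lapBar, Matrix.sub_apply, Matrix.diagonal_apply, Matrix.of_apply, mul_sub]
    congr 1
    by_cases hkj : k = j <;> simp [hkj]
  rw [Finset.sum_congr rfl (fun k _ => hexp k), Finset.sum_sub_distrib] at h'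
  simp only [Finset.sum_ite_eq', Finset.mem_univ, if_true] at h'
  linarith

end Adjugate

section Quad
variable {n : ℕ} {A : Matrix (Fin n) (Fin n) ℝ}

lemma WL_apply (i j : Fin n) :
    (Wmat A * lapOf A) i j = minorDet A i * ((if i = j then inDeg A i else 0) - A i j) := by
  simp [Wmat, lapOf, Matrix.diagonal_mul, Matrix.sub_apply, Matrix.diagonal_apply]

lemma Q_eq (x : Fin n → ℝ) :
    ∑ i, ∑ j, (Wmat A * lapOf A) i j * x i * x j
      = ∑ i, minorDet A i * inDeg A i * x i ^ 2
        - ∑ i, ∑ j, minorDet A i * A i j * x i * x j := by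
  rw [← Finset.sum_sub_distrib]
  congr 1; ext i
  have : ∀ j, (Wmat A * lapOf A) i j * x i * x j
      = (if i = j then minorDet A i * inDeg A i * x i ^ 2 else 0)
        - minorDet A i * A i j * x i * x j := by
    intro j
    rw [WL_apply]
    by_cases h : i = j
    · subst h; simp only [if_true]; ring
    · simp only [h, if_false]; ring
  rw [Finset.sum_congr rfl (fun j _ => this j), Finset.sum_sub_distrib]
  simp only [Finset.sum_ite_eq, Finset.mem_univ, if_true]

lemma PhiE_eq_Q (hsc : StronglyConnected A) (hn : 2 ≤ n) (x : Fin n → ℝ) :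
    PhiE A x = 2 * ∑ i, ∑ j, (Wmat A * lapOf A) i j * x i * x j := by
  have expand : ∀ i j, minorDet A i * |A i j| * (x i - Real.sign (A i j) * x j) ^ 2
      = (minorDet A i * |A i j| * x i ^ 2 + minorDet A i * |A i j| * x j ^ 2)
        - 2 * (minorDet A i * A i j * x i * x j) := by
    intro i j
    rcases lt_trichotomy (A i j) 0 with h | h | h
    · rw [Real.sign_of_neg h, abs_of_neg h]; ring
    · simp [h]
    · rw [Real.sign_of_pos h, abs_of_pos h]; ring
  have hsum : PhiE A x
      = (∑ i, ∑ j, minorDet A i * |A i j| * x i ^ 2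
          + ∑ i, ∑ j, minorDet A i * |A i j| * x j ^ 2)
        - 2 * ∑ i, ∑ j, minorDet A i * A i j * x i * x j := by
    rw [PhiE]
    rw [Finset.sum_congr rfl (fun i _ => Finset.sum_congr rfl (fun j _ => expand i j))]
    simp only [Finset.sum_sub_distrib, Finset.sum_add_distrib, ← Finset.mul_sum]
  have hS1 : ∑ i, ∑ j, minorDet A i * |A i j| * x i ^ 2
      = ∑ i, minorDet A i * inDeg A i * x i ^ 2 := by
    refine Finset.sum_congr rfl fun i _ => ?_
    simp only [inDeg, Finset.mul_sum, Finset.sum_mul]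
  have hS3 : ∑ i, ∑ j, minorDet A i * |A i j| * x j ^ 2
      = ∑ i, minorDet A i * inDeg A i * x i ^ 2 := by
    rw [Finset.sum_comm]
    congr 1; ext j
    have : ∑ i, minorDet A i * |A i j| * x j ^ 2
        = (∑ i, minorDet A i * |A i j|) * x j ^ 2 := by
      rw [Finset.sum_mul]
    rw [this, w_dot_lapBar hsc hn j]
  rw [hsum, hS1, hS3, Q_eq]
  ring
end Quad

section Pos
variable {n : ℕ} {A : Matrix (Fin n) (Fin n) ℝ}

lemma PhiE_nonneg (hsc : StronglyConnected A) (hn : 2 ≤ n) (x : Fin n → ℝ) :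
    0 ≤ PhiE A x :=
  Finset.sum_nonneg fun i _ => Finset.sum_nonneg fun j _ =>
    mul_nonneg (mul_nonneg (le_of_lt (minorDet_pos hsc hn i)) (abs_nonneg _)) (sq_nonneg _)

lemma balanced_of_PhiE_zero (hsc : StronglyConnected A) (hn : 2 ≤ n) {x : Fin n → ℝ}
    (hx : x ≠ 0) (h0 : PhiE A x = 0) : StructBalanced A := by
  have hterm : ∀ i j, A i j ≠ 0 → x i = Real.sign (A i j) * x j := by
    intro i j hij
    have houter := (Finset.sum_eq_zero_iff_of_nonneg (fun i _ => Finset.sum_nonneg fun j _ =>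
      mul_nonneg (mul_nonneg (le_of_lt (minorDet_pos hsc hn i)) (abs_nonneg _))
        (sq_nonneg _))).mp h0 i (Finset.mem_univ i)
    have hinner := (Finset.sum_eq_zero_iff_of_nonneg (fun j _ =>
      mul_nonneg (mul_nonneg (le_of_lt (minorDet_pos hsc hn i)) (abs_nonneg _))
        (sq_nonneg _))).mp houter j (Finset.mem_univ j)
    have hw := minorDet_pos hsc hn i
    have habs : (0:ℝ) < |A i j| := abs_pos.mpr hij
    have : (x i - Real.sign (A i j) * x j) ^ 2 = 0 := by
      by_contra hne
      have h1 : 0 < (x i - Real.sign (A i j) * x j) ^ 2 :=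
        lt_of_le_of_ne (sq_nonneg _) (Ne.symm hne)
      nlinarith [mul_pos (mul_pos hw habs) h1]
    have := pow_eq_zero_iff (n := 2) (by norm_num) |>.mp this
    linarith [sub_eq_zero.mp this]
  obtain ⟨u, hu⟩ := Function.ne_iff.mp hx
  set c := |x u| with hc
  have hcpos : 0 < c := abs_pos.mpr hu
  have hall : ∀ l, |x l| = c := by
    apply myClosure hsc {k | |x k| = c} ?_ (rfl : |x u| = c)
    intro k hk j hj
    have h1 := hterm k j hj
    have hsgn : |Real.sign (A k j)| = 1 := by
      rcases lt_trichotomy (A k j) 0 with h | h | h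
      · rw [Real.sign_of_neg h]; norm_num
      · exact absurd h hj
      · rw [Real.sign_of_pos h]; norm_num
    have : |x j| = |x k| := by
      rw [h1, abs_mul, hsgn, one_mul]
    rw [Set.mem_setOf_eq, this]
    exact hk
  refine ⟨fun k => x k / c, fun k => ?_, fun i j => ?_⟩
  · have hthis := hall k
    rcases abs_cases (x k) with ⟨h1, -⟩ | ⟨h1, -⟩
    · left
      rw [h1] at hthis
      rw [div_eq_one_iff_eq (ne_of_gt hcpos)]
      exact hthis
    · right
      rw [h1] at hthis
      rw [div_eq_iff (ne_of_gt hcpos)]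
      linarith
  · by_cases hij : A i j = 0
    · simp [hij]
    · have h1 := hterm i j hij
      have hsq : (x j / c) ^ 2 = 1 := by
        have hthis := hall j
        have hxj : x j ≠ 0 := by
          intro h; rw [h, abs_zero] at hthis; linarith
        rw [div_pow, show c ^ 2 = x j ^ 2 by rw [← hthis, sq_abs]]
        exact div_self (pow_ne_zero 2 hxj)
      have hsgnA : Real.sign (A i j) * A i j = |A i j| := by
        rcases lt_trichotomy (A i j) 0 with h | h | h
        · rw [Real.sign_of_neg h, abs_of_neg h]; ring
        · exact absurd h hij
        · rw [Real.sign_of_pos h, abs_of_pos h]; ring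
      have : x i / c * A i j * (x j / c) = |A i j| * (x j / c)^2 := by
        rw [h1, ← hsgnA]; ring
      rw [this, hsq, mul_one]
      exact abs_nonneg _

lemma lap_mulVec_gauge {σ : Fin n → ℝ} (hg : IsGauge σ)
    (hpos : ∀ i j, 0 ≤ σ i * A i j * σ j) : lapOf A *ᵥ σ = 0 := by
  have hsq : ∀ i, σ i * σ i = 1 := by
    intro i; rcases hg i with h | h <;> rw [h] <;> norm_num
  have key : ∀ i j, A i j * σ j = σ i * |A i j| := by
    intro i j
    have h1 : σ i * A i j * σ j = |A i j| := by
      have habs : |σ i * A i j * σ j| = |A i j| := by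
        rw [abs_mul, abs_mul]
        rcases hg i with h | h <;> rcases hg j with h' | h' <;> rw [h, h'] <;> simp
      rw [← habs]; exact (abs_of_nonneg (hpos i j)).symm
    have := congrArg (fun t => σ i * t) h1
    calc A i j * σ j = σ i * σ i * (A i j * σ j) := by rw [hsq i, one_mul]
      _ = σ i * (σ i * A i j * σ j) := by ring
      _ = σ i * |A i j| := by rw [h1]
  have hlap : ∀ (v : Fin n → ℝ) k, (lapOf A *ᵥ v) k = inDeg A k * v k - ∑ j, A k j * v j := by
    intro v k
    simp only [lapOf, Matrix.mulVec, dotProduct, Matrix.sub_apply,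
      sub_mul, Finset.sum_sub_distrib, Matrix.diagonal_apply]
    congr 1
    simp [ite_mul, Finset.sum_ite_eq]
  ext k
  show (lapOf A *ᵥ σ) k = 0
  rw [hlap]
  rw [Finset.sum_congr rfl (fun j _ => key k j), ← Finset.mul_sum]
  have : ∑ j, |A k j| = inDeg A k := rfl
  rw [this]
  ring

end Pos

section Main
variable {n : ℕ}

lemma charpoly_isRoot_iff (N : Matrix (Fin n) (Fin n) ℂ) (μ : ℂ) :
    N.charpoly.IsRoot μ ↔ (Matrix.diagonal (fun _ : Fin n => μ) - N).det = 0 := by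
  have hmap : (Matrix.charmatrix N).map (Polynomial.evalRingHom μ)
      = Matrix.diagonal (fun _ : Fin n => μ) - N := by
    ext i j
    by_cases h : i = j
    · subst h
      simp [Matrix.charmatrix_apply_eq]
    · simp [Matrix.charmatrix_apply_ne _ _ _ h, Matrix.diagonal_apply_ne _ h]
  have key : N.charpoly.eval μ = (Matrix.diagonal (fun _ : Fin n => μ) - N).det := by
    rw [Matrix.charpoly, ← hmap]
    exact RingHom.map_det (Polynomial.evalRingHom μ) (Matrix.charmatrix N)
  rw [Polynomial.IsRoot, key]

end Main

/-- `G` is structurally unbalanced iff every complex eigenvalue of `W·L`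
has strictly positive real part. -/
theorem unbalanced_iff_WL_spectrum (n : ℕ) (hn : 2 ≤ n)
    (A : Matrix (Fin n) (Fin n) ℝ)
    (hdiag : ∀ i, A i i = 0) (hdigon : ∀ i j, 0 ≤ A i j * A j i)
    (hsc : StronglyConnected A) :
    ¬ StructBalanced A ↔
      ∀ μ : ℂ, (((Wmat A * lapOf A).map Complex.ofReal).charpoly).IsRoot μ → 0 < μ.re := by
  set B := Wmat A * lapOf A with hB
  constructor
  · intro hnb μ hroot
    rw [charpoly_isRoot_iff] at hroot
    obtain ⟨v, hv, hveq⟩ := Matrix.exists_mulVec_eq_zero_iff.mpr hroot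
    have hNv : ∀ k, ∑ j, (B k j : ℂ) * v j = μ * v k := by
      intro k
      have h := congrFun hveq k
      simp only [Matrix.mulVec, dotProduct, Matrix.sub_apply, Matrix.diagonal_apply,
        Matrix.map_apply, sub_mul, Finset.sum_sub_distrib, ite_mul, zero_mul,
        Finset.sum_ite_eq, Finset.mem_univ, if_true, Pi.zero_apply, sub_eq_zero] at h
      exact h.symm
    set a : Fin n → ℝ := fun k => (v k).re with ha
    set b : Fin n → ℝ := fun k => (v k).im with hb'
    set s : ℝ := ∑ k, Complex.normSq (v k) with hs
    have hspos : 0 < s := by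
      obtain ⟨u, hu⟩ := Function.ne_iff.mp hv
      have h1 : 0 < Complex.normSq (v u) := Complex.normSq_pos.mpr hu
      exact lt_of_lt_of_le h1 (Finset.single_le_sum
        (f := fun k => Complex.normSq (v k)) (fun k _ => Complex.normSq_nonneg _)
        (Finset.mem_univ u))
    -- quadratic form identity
    have hT : (∑ k, (starRingEnd ℂ) (v k) * (μ * v k)).re = μ.re * s := by
      have h1 : ∑ k, (starRingEnd ℂ) (v k) * (μ * v k)
          = μ * (s : ℂ) := by
        rw [hs]
        push_cast
        rw [Finset.mul_sum]
        congr 1; ext k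
        rw [show (starRingEnd ℂ) (v k) * (μ * v k)
            = μ * ((starRingEnd ℂ) (v k) * v k) from by ring,
          ← Complex.normSq_eq_conj_mul_self]
      rw [h1]
      simp [Complex.mul_re]
    have hT2 : (∑ k, (starRingEnd ℂ) (v k) * (μ * v k)).re
        = (∑ i, ∑ j, B i j * a i * a j) + (∑ i, ∑ j, B i j * b i * b j) := by
      have h1 : ∀ k, (starRingEnd ℂ) (v k) * (μ * v k)
          = ∑ j, (B k j : ℂ) * ((starRingEnd ℂ) (v k) * v j) := by
        intro k
        rw [← hNv k, Finset.mul_sum]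
        congr 1; ext j; ring
      rw [Finset.sum_congr rfl (fun k _ => h1 k)]
      rw [Complex.re_sum]
      rw [← Finset.sum_add_distrib]
      congr 1; ext k
      rw [Complex.re_sum, ← Finset.sum_add_distrib]
      congr 1; ext j
      simp [Complex.mul_re, Complex.mul_im, ha, hb']
      ring
    have hphipos : ∀ x : Fin n → ℝ, x ≠ 0 → 0 < PhiE A x := fun x hx =>
      lt_of_le_of_ne (PhiE_nonneg hsc hn x)
        (fun h => hnb (balanced_of_PhiE_zero hsc hn hx h.symm))
    have hQ : ∀ x : Fin n → ℝ, ∑ i, ∑ j, B i j * x i * x j = PhiE A x / 2 := by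
      intro x
      rw [PhiE_eq_Q hsc hn x]
      ring
    have hab : a ≠ 0 ∨ b ≠ 0 := by
      by_contra h
      push_neg at h
      apply hv
      ext k
      apply Complex.ext
      · simpa using congrFun h.1 k
      · simpa using congrFun h.2 k
    have hsum_pos : 0 < (∑ i, ∑ j, B i j * a i * a j) + (∑ i, ∑ j, B i j * b i * b j) := by
      rw [hQ a, hQ b]
      rcases hab with h | h
      · have h1 := hphipos a h
        have h2 := PhiE_nonneg hsc hn b
        linarith
      · have h1 := hphipos b h
        have h2 := PhiE_nonneg hsc hn a
        linarith
    have hfin : 0 < μ.re * s := by rw [← hT, hT2]; exact hsum_pos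
    by_contra hle
    push_neg at hle
    nlinarith
  · intro hall hbal
    obtain ⟨σ, hg, hpos⟩ := hbal
    have hσ : σ ≠ 0 := by
      intro h
      rcases hg ⟨0, by omega⟩ with h1 | h1 <;> rw [congrFun h ⟨0, by omega⟩] at h1 <;>
        norm_num at h1
    have hl : lapOf A *ᵥ σ = 0 := lap_mulVec_gauge hg hpos
    have hBσ : B *ᵥ σ = 0 := by
      rw [hB, ← Matrix.mulVec_mulVec, hl, Matrix.mulVec_zero]
    have hdetB : B.det = 0 := Matrix.exists_mulVec_eq_zero_iff.mp ⟨σ, hσ, hBσ⟩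
    have hroot : ((B.map Complex.ofReal).charpoly).IsRoot 0 := by
      rw [charpoly_isRoot_iff]
      have : Matrix.diagonal (fun _ : Fin n => (0:ℂ)) - B.map Complex.ofReal
          = -(B.map Complex.ofReal) := by
        simp
      rw [this, Matrix.det_neg]
      have : (B.map Complex.ofReal).det = ((B.det : ℂ)) := by
        have h2 := (RingHom.map_det Complex.ofRealHom B).symm
        simp only [RingHom.mapMatrix_apply] at h2; exact h2
      rw [this, hdetB]
      simp
    have := hall 0 hroot
    simp at this
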